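/- Let X be a d×d positive definite Hermitian matrix and P a d×d positive semidefinite Hermitian matrix, and let P' := P + X^{-1/2}(I_d − X^{1/2} P X^{1/2})_+ X^{-1/2}. Then P' ⪰ P and P' ⪰ X^{-1}. -/

import Mathlib

open Matrix
open scoped ComplexOrder

/-- The positive part `M₊` of a Hermitian matrix: keep the spectral decomposition but set
all negative eigenvalues to zero (junk value `0` if `M` is not Hermitian). -/
noncomputable def matPosPart {d : ℕ} (M : Matrix (Fin d) (Fin d) ℂ) :
    Matrix (Fin d) (Fin d) ℂ :=
  if hM : M.IsHermitian then
    (hM.eigenvectorUnitary : Matrix (Fin d) (Fin d) ℂ) *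
      Matrix.diagonal (fun i => ((max (hM.eigenvalues i) 0 : ℝ) : ℂ)) *
      star (hM.eigenvectorUnitary : Matrix (Fin d) (Fin d) ℂ)
  else 0

lemma matPosPart_posSemidef {d : ℕ} {M : Matrix (Fin d) (Fin d) ℂ} (hM : M.IsHermitian) :
    (matPosPart M).PosSemidef := by
  rw [matPosPart, dif_pos hM, Matrix.star_eq_conjTranspose]
  exact (Matrix.posSemidef_diagonal_iff.mpr fun i => by positivity).mul_mul_conjTranspose_same _

lemma matPosPart_sub_posSemidef {d : ℕ} {M : Matrix (Fin d) (Fin d) ℂ} (hM : M.IsHermitian) :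
    (matPosPart M - M).PosSemidef := by
  rw [matPosPart, dif_pos hM]
  have heq : (hM.eigenvectorUnitary : Matrix (Fin d) (Fin d) ℂ) *
      Matrix.diagonal (fun i => ((max (hM.eigenvalues i) 0 : ℝ) : ℂ)) *
      star (hM.eigenvectorUnitary : Matrix (Fin d) (Fin d) ℂ) - M
      = (hM.eigenvectorUnitary : Matrix (Fin d) (Fin d) ℂ) *
        (Matrix.diagonal (fun i => ((max (hM.eigenvalues i) 0 : ℝ) : ℂ))
          - Matrix.diagonal (RCLike.ofReal ∘ hM.eigenvalues)) *
        star (hM.eigenvectorUnitary : Matrix (Fin d) (Fin d) ℂ) := by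
    rw [mul_sub, sub_mul]; congr 1; exact hM.spectral_theorem
  rw [heq, Matrix.diagonal_sub, Matrix.star_eq_conjTranspose]
  refine (Matrix.posSemidef_diagonal_iff.mpr fun i => ?_).mul_mul_conjTranspose_same _
  simp only [Function.comp_apply, ← Complex.ofReal_sub, RCLike.ofReal_nonneg]
  simp [le_max_iff]

/-- Let `X` be PD Hermitian, `P` PSD Hermitian, and
`P' := P + X^{-1/2}(I − X^{1/2} P X^{1/2})₊ X^{-1/2}`. Then `P' ⪰ P` and `P' ⪰ X⁻¹`.
Here `S` denotes the (unique) PD square root `X^{1/2}` of `X`. -/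
theorem stmt4 (d : ℕ) (X P S P' : Matrix (Fin d) (Fin d) ℂ)
    (hX : X.PosDef) (hP : P.PosSemidef)
    (hS : S.PosDef) (hSX : S * S = X)
    (hP' : P' = P + S⁻¹ * matPosPart (1 - S * P * S) * S⁻¹) :
    (P' - P).PosSemidef ∧ (P' - X⁻¹).PosSemidef := by
  set M : Matrix (Fin d) (Fin d) ℂ := 1 - S * P * S with hM
  have hSh : S.IsHermitian := hS.isHermitian
  have hSih : (S⁻¹).IsHermitian := hSh.inv
  have hMh : M.IsHermitian := by
    apply Matrix.IsHermitian.sub Matrix.isHermitian_one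
    simp [Matrix.IsHermitian, Matrix.conjTranspose_mul, hSh.eq, hP.isHermitian.eq, mul_assoc]
  have hdet : IsUnit S.det := hS.det_pos.ne'.isUnit
  have hinv : S⁻¹ * S = 1 := Matrix.nonsing_inv_mul S hdet
  have hinv' : S * S⁻¹ = 1 := Matrix.mul_nonsing_inv S hdet
  have hSinv2 : S⁻¹ * S⁻¹ = X⁻¹ := by rw [← hSX, Matrix.mul_inv_rev]
  have hmid : S⁻¹ * (S * P * S) * S⁻¹ = P := by
    rw [← mul_assoc, ← mul_assoc, hinv, one_mul, mul_assoc, hinv', mul_one]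
  constructor
  · have h1 : P' - P = S⁻¹ * matPosPart M * (S⁻¹)ᴴ := by
      rw [hSih.eq, hP', add_sub_cancel_left]
    rw [h1]
    exact (matPosPart_posSemidef hMh).mul_mul_conjTranspose_same _
  · have key : P' - X⁻¹ = S⁻¹ * (matPosPart M - M) * (S⁻¹)ᴴ := by
      rw [hSih.eq]
      have expand : S⁻¹ * (matPosPart M - M) * S⁻¹
          = S⁻¹ * matPosPart M * S⁻¹ - (S⁻¹ * S⁻¹ - S⁻¹ * (S * P * S) * S⁻¹) := by
        rw [hM]; noncomm_ring
      rw [expand, hmid, hSinv2, hP']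
      abel
    rw [key]
    exact (matPosPart_sub_posSemidef hMh).mul_mul_conjTranspose_same _
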